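/- The Moyal product on polynomial functions on ℝ², defined by f ⋆ g = Σ_{k≥0} (−iℏ/2)^k (1/k!) Σ over indices ω^{i_1 j_1}⋯ω^{i_k j_k} ∂_{i_1}⋯∂_{i_k} f · ∂_{j_1}⋯∂_{j_k} g with ω the standard constant symplectic bivector, is associative as a product on ℝ[x,p][[ℏ]]. -/

import Mathlib

open scoped BigOperators

open MvPolynomial

/-- The standard symplectic bivector on `ℝ²`: `ω^{12} = 1 = −ω^{21}`, `ω^{11} = ω^{22} = 0`. -/
def omegaBV : Fin 2 → Fin 2 → ℂ := fun i j =>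
  if i = 0 ∧ j = 1 then 1 else if i = 1 ∧ j = 0 then -1 else 0

/-- Iterated partial derivative `∂_{v 0} ⋯ ∂_{v (k-1)}` of a polynomial in two variables. -/
noncomputable def applyPD {k : ℕ} (v : Fin k → Fin 2) (f : MvPolynomial (Fin 2) ℂ) :
    MvPolynomial (Fin 2) ℂ :=
  (List.ofFn v).foldl (fun p i => MvPolynomial.pderiv i p) f

/-- The `k`-th order term of the Moyal product:
`(−i/2)^k (1/k!) Σ ω^{i₁j₁}⋯ω^{iₖjₖ} ∂_{i₁}⋯∂_{iₖ}f · ∂_{j₁}⋯∂_{jₖ}g`. -/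
noncomputable def moyalTerm (k : ℕ) (f g : MvPolynomial (Fin 2) ℂ) :
    MvPolynomial (Fin 2) ℂ :=
  ((-Complex.I / 2) ^ k / (k.factorial : ℂ)) •
    ∑ iv : Fin k → Fin 2, ∑ jv : Fin k → Fin 2,
      (∏ t, omegaBV (iv t) (jv t)) • (applyPD iv f * applyPD jv g)

abbrev R2 := MvPolynomial (Fin 2) ℂ

lemma pderiv_pderiv_comm {σ R : Type*} [CommSemiring R] [DecidableEq σ] (i j : σ)
    (f : MvPolynomial σ R) :
    pderiv i (pderiv j f) = pderiv j (pderiv i f) := by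
  induction f using MvPolynomial.induction_on with
  | C a => simp
  | add p q hp hq => simp [hp, hq]
  | mul_X p s h =>
    simp only [pderiv_mul, map_add, pderiv_X, h]
    rcases eq_or_ne s i with rfl | hi <;> rcases eq_or_ne s j with rfl | hj <;>
      simp [Pi.single_apply, *]

noncomputable def msum (k : ℕ) (f g : R2) : R2 :=
  ∑ iv : Fin k → Fin 2, ∑ jv : Fin k → Fin 2,
      (∏ t, omegaBV (iv t) (jv t)) • (applyPD iv f * applyPD jv g)

noncomputable def S : ℕ → R2 → R2 → R2
  | 0, f, g => f * g
  | (k+1), f, g => S k (pderiv 0 f) (pderiv 1 g) - S k (pderiv 1 f) (pderiv 0 g)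

lemma applyPD_cons {k : ℕ} (i0 : Fin 2) (v : Fin k → Fin 2) (f : R2) :
    applyPD (Fin.cons i0 v) f = applyPD v (pderiv i0 f) := by
  simp [applyPD, List.ofFn_succ, Fin.cons_succ]


lemma msum_succ (k : ℕ) (f g : R2) :
    msum (k+1) f g = msum k (pderiv 0 f) (pderiv 1 g) - msum k (pderiv 1 f) (pderiv 0 g) := by
  have hsplit : ∀ (F : (Fin (k+1) → Fin 2) → R2),
      (∑ iv : Fin (k+1) → Fin 2, F iv)
        = ∑ i0 : Fin 2, ∑ iv : Fin k → Fin 2, F (Fin.cons i0 iv) := by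
    intro F
    rw [← Equiv.sum_comp (Fin.consEquiv fun _ => Fin 2) F, Fintype.sum_prod_type]
    rfl
  have hprod : ∀ (i0 j0 : Fin 2) (iv jv : Fin k → Fin 2),
      (∏ t : Fin (k+1), omegaBV ((Fin.cons i0 iv : Fin (k+1) → Fin 2) t) ((Fin.cons j0 jv : Fin (k+1) → Fin 2) t))
        = omegaBV i0 j0 * ∏ t : Fin k, omegaBV (iv t) (jv t) := by
    intro i0 j0 iv jv
    rw [Fin.prod_univ_succ]
    simp [Fin.cons_succ]
  have hcomm : ∀ (G : Fin 2 → (Fin k → Fin 2) → Fin 2 → R2),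
      (∑ i0 : Fin 2, ∑ iv : Fin k → Fin 2, ∑ j0 : Fin 2, G i0 iv j0)
        = ∑ i0 : Fin 2, ∑ j0 : Fin 2, ∑ iv : Fin k → Fin 2, G i0 iv j0 :=
    fun G => Finset.sum_congr rfl fun i0 _ => Finset.sum_comm
  rw [msum]
  simp only [hsplit, hprod, applyPD_cons]
  rw [hcomm]
  simp only [Fin.sum_univ_two]
  have h00 : omegaBV 0 0 = 0 := by simp [omegaBV]
  have h01 : omegaBV 0 1 = 1 := by simp [omegaBV]
  have h10 : omegaBV 1 0 = -1 := by simp [omegaBV]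
  have h11 : omegaBV 1 1 = 0 := by simp [omegaBV]
  simp only [h00, h01, h10, h11, zero_mul, one_mul, neg_mul, zero_smul, neg_smul,
    Finset.sum_const_zero, Finset.sum_neg_distrib, msum]
  abel

lemma msum_zero (f g : R2) : msum 0 f g = f * g := by
  simp [msum, applyPD]

lemma msum_eq_S (k : ℕ) (f g : R2) : msum k f g = S k f g := by
  induction k generalizing f g with
  | zero => simp [msum_zero, S]
  | succ k ih => rw [msum_succ, S, ih, ih]

lemma moyalTerm_eq (k : ℕ) (f g : R2) :
    moyalTerm k f g = ((-Complex.I / 2) ^ k / (k.factorial : ℂ)) • S k f g := by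
  rw [moyalTerm, ← msum_eq_S, msum]

lemma S_add_left (k : ℕ) (f f' g : R2) : S k (f + f') g = S k f g + S k f' g := by
  induction k generalizing f f' g with
  | zero => simp [S, add_mul]
  | succ k ih => simp only [S, map_add, ih]; abel

lemma S_add_right (k : ℕ) (f g g' : R2) : S k f (g + g') = S k f g + S k f g' := by
  induction k generalizing f g g' with
  | zero => simp [S, mul_add]
  | succ k ih => simp only [S, map_add, ih]; abel

lemma S_smul_left (k : ℕ) (c : ℂ) (f g : R2) : S k (c • f) g = c • S k f g := by
  induction k generalizing f g with
  | zero => simp [S, smul_mul_assoc]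
  | succ k ih =>
    simp only [S, Derivation.map_smul, ih, smul_sub]

lemma S_zero_left (k : ℕ) (g : R2) : S k 0 g = 0 := by
  induction k generalizing g with
  | zero => simp [S]
  | succ k ih => simp [S, ih]

lemma S_zero_right (k : ℕ) (f : R2) : S k f 0 = 0 := by
  induction k generalizing f with
  | zero => simp [S]
  | succ k ih => simp [S, ih]

lemma pderiv_S (i : Fin 2) (k : ℕ) (f g : R2) :
    pderiv i (S k f g) = S k (pderiv i f) g + S k f (pderiv i g) := by
  induction k generalizing f g with
  | zero => simp [S, pderiv_mul]; ring
  | succ k ih =>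
    simp only [S, map_sub, ih, pderiv_pderiv_comm]
    abel

abbrev V6 := MvPolynomial (Fin 6) ℂ

/-- derivative as an endomorphism -/
noncomputable def pd (i : Fin 6) : Module.End ℂ V6 :=
  { toFun := fun p => pderiv i p
    map_add' := fun p q => map_add _ p q
    map_smul' := fun c p => Derivation.map_smul _ c p }

lemma pd_apply (i : Fin 6) (p : V6) : pd i p = pderiv i p := rfl

lemma pd_comm (i j : Fin 6) : Commute (pd i) (pd j) := by
  apply LinearMap.ext
  intro p
  simp [Module.End.mul_apply, pd_apply, pderiv_pderiv_comm]

def e1 : Fin 2 → Fin 6 := ![0, 1]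
def e2 : Fin 2 → Fin 6 := ![2, 3]
def e3 : Fin 2 → Fin 6 := ![4, 5]

lemma e1_inj : Function.Injective e1 := by decide
lemma e2_inj : Function.Injective e2 := by decide
lemma e3_inj : Function.Injective e3 := by decide

noncomputable def Phi (f g h : R2) : V6 :=
  rename e1 f * rename e2 g * rename e3 h

lemma pderiv_rename_zero {σ τ : Type*} [DecidableEq σ] [DecidableEq τ]
    (σf : σ → τ) (i : τ) (hi : ∀ j, σf j ≠ i) (p : MvPolynomial σ ℂ) :
    pderiv i (rename σf p) = 0 := by
  induction p using MvPolynomial.induction_on with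
  | C a => simp
  | add p q hp hq => simp [hp, hq]
  | mul_X p s h => simp [pderiv_mul, h, hi s]

lemma pd_e1_Phi (i : Fin 2) (f g h : R2) :
    pd (e1 i) (Phi f g h) = Phi (pderiv i f) g h := by
  have h2 : ∀ j, e2 j ≠ e1 i := by revert i; decide
  have h3 : ∀ j, e3 j ≠ e1 i := by revert i; decide
  simp [pd_apply, Phi, pderiv_mul, pderiv_rename_zero _ _ h2,
    pderiv_rename_zero _ _ h3, pderiv_rename e1_inj]
  ring

lemma pd_e2_Phi (i : Fin 2) (f g h : R2) :
    pd (e2 i) (Phi f g h) = Phi f (pderiv i g) h := by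
  have h1 : ∀ j, e1 j ≠ e2 i := by revert i; decide
  have h3 : ∀ j, e3 j ≠ e2 i := by revert i; decide
  simp [pd_apply, Phi, pderiv_mul, pderiv_rename_zero _ _ h1,
    pderiv_rename_zero _ _ h3, pderiv_rename e2_inj]
  ring

lemma pd_e3_Phi (i : Fin 2) (f g h : R2) :
    pd (e3 i) (Phi f g h) = Phi f g (pderiv i h) := by
  have h1 : ∀ j, e1 j ≠ e3 i := by revert i; decide
  have h2 : ∀ j, e2 j ≠ e3 i := by revert i; decide
  simp [pd_apply, Phi, pderiv_mul, pderiv_rename_zero _ _ h1,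
    pderiv_rename_zero _ _ h2, pderiv_rename e3_inj]

/-- the three pairwise "Poisson" operators -/
noncomputable def P12 : Module.End ℂ V6 := pd 0 * pd 3 - pd 1 * pd 2
noncomputable def P13 : Module.End ℂ V6 := pd 0 * pd 5 - pd 1 * pd 4
noncomputable def P23 : Module.End ℂ V6 := pd 2 * pd 5 - pd 3 * pd 4

lemma comm_pp (a b c d : Fin 6) : Commute (pd a * pd b) (pd c * pd d) :=
  ((pd_comm a c).mul_right (pd_comm a d)).mul_left ((pd_comm b c).mul_right (pd_comm b d))

lemma comm_sub {M : Type*} [Ring M] {x y z w : M} (h1 : Commute x z) (h2 : Commute x w)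
    (h3 : Commute y z) (h4 : Commute y w) : Commute (x - y) (z - w) :=
  (h1.sub_right h2).sub_left (h3.sub_right h4)

lemma comm_P12_P13 : Commute P12 P13 := comm_sub (comm_pp ..) (comm_pp ..) (comm_pp ..) (comm_pp ..)
lemma comm_P12_P23 : Commute P12 P23 := comm_sub (comm_pp ..) (comm_pp ..) (comm_pp ..) (comm_pp ..)
lemma comm_P13_P23 : Commute P13 P23 := comm_sub (comm_pp ..) (comm_pp ..) (comm_pp ..) (comm_pp ..)

lemma P12_Phi (f g h : R2) :
    P12 (Phi f g h) = Phi (pderiv 0 f) (pderiv 1 g) h - Phi (pderiv 1 f) (pderiv 0 g) h := by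
  have h0 : (0 : Fin 6) = e1 0 := rfl
  have h1 : (1 : Fin 6) = e1 1 := rfl
  have h2 : (2 : Fin 6) = e2 0 := rfl
  have h3 : (3 : Fin 6) = e2 1 := rfl
  simp only [P12, LinearMap.sub_apply, Module.End.mul_apply, h0, h1, h2, h3,
    pd_e1_Phi, pd_e2_Phi]

lemma P13_Phi (f g h : R2) :
    P13 (Phi f g h) = Phi (pderiv 0 f) g (pderiv 1 h) - Phi (pderiv 1 f) g (pderiv 0 h) := by
  have h0 : (0 : Fin 6) = e1 0 := rfl
  have h1 : (1 : Fin 6) = e1 1 := rfl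
  have h4 : (4 : Fin 6) = e3 0 := rfl
  have h5 : (5 : Fin 6) = e3 1 := rfl
  simp only [P13, LinearMap.sub_apply, Module.End.mul_apply, h0, h1, h4, h5,
    pd_e1_Phi, pd_e3_Phi]

lemma P23_Phi (f g h : R2) :
    P23 (Phi f g h) = Phi f (pderiv 0 g) (pderiv 1 h) - Phi f (pderiv 1 g) (pderiv 0 h) := by
  have h2 : (2 : Fin 6) = e2 0 := rfl
  have h3 : (3 : Fin 6) = e2 1 := rfl
  have h4 : (4 : Fin 6) = e3 0 := rfl
  have h5 : (5 : Fin 6) = e3 1 := rfl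
  simp only [P23, LinearMap.sub_apply, Module.End.mul_apply, h2, h3, h4, h5,
    pd_e2_Phi, pd_e3_Phi]

/-- merge map back to two variables -/
noncomputable def mu : V6 →ₐ[ℂ] R2 :=
  aeval fun i => X (![0, 1, 0, 1, 0, 1] i)

lemma mu_Phi (f g h : R2) : mu (Phi f g h) = f * g * h := by
  have key : ∀ (e : Fin 2 → Fin 6), (∀ j, ![0, 1, 0, 1, 0, 1] (e j) = j) →
      ∀ p : R2, mu (rename e p) = p := by
    intro e he p
    rw [mu, aeval_rename]
    have : ((fun i => (X (![0, 1, 0, 1, 0, 1] i) : R2)) ∘ e) = X := by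
      funext j; simp [Function.comp, he j]
    rw [this, aeval_X_left_apply]
  rw [Phi, map_mul, map_mul, key e1 (by decide), key e2 (by decide), key e3 (by decide)]

lemma mu_P12_pow (a : ℕ) (f g h : R2) :
    mu ((P12 ^ a) (Phi f g h)) = S a f g * h := by
  induction a generalizing f g with
  | zero => simp [mu_Phi, S]
  | succ a ih =>
    rw [pow_succ, Module.End.mul_apply, P12_Phi, map_sub, map_sub, ih, ih, S, sub_mul]

lemma mu_P23_pow (b : ℕ) (f g h : R2) :
    mu ((P23 ^ b) (Phi f g h)) = f * S b g h := by
  induction b generalizing g h with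
  | zero => simp [mu_Phi, S, mul_assoc]
  | succ b ih =>
    rw [pow_succ, Module.End.mul_apply, P23_Phi, map_sub, map_sub, ih, ih, S, mul_sub]

lemma commQP : Commute P12 (P13 + P23) := comm_P12_P13.add_right comm_P12_P23
lemma commSR : Commute P23 (P12 + P13) := comm_P12_P23.symm.add_right comm_P13_P23.symm

lemma K1 (b a : ℕ) (f g h : R2) :
    S b (S a f g) h = mu (((P13 + P23) ^ b) ((P12 ^ a) (Phi f g h))) := by
  induction b generalizing f g h with
  | zero =>
    simp only [pow_zero, Module.End.one_apply, mu_P12_pow]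
    rfl
  | succ b ih =>
    have hswap : ∀ x : V6,
        ((P13 + P23) ^ b) ((P12 ^ a) ((P13 + P23) x))
          = ((P13 + P23) ^ (b+1)) ((P12 ^ a) x) := by
      intro x
      have : (P13 + P23) ^ b * (P12 ^ a * (P13 + P23))
          = (P13 + P23) ^ (b+1) * P12 ^ a := by
        rw [(commQP.pow_left a).eq, ← mul_assoc, ← pow_succ]
      calc ((P13 + P23) ^ b) ((P12 ^ a) ((P13 + P23) x))
          = ((P13 + P23) ^ b * (P12 ^ a * (P13 + P23))) x := rfl
        _ = ((P13 + P23) ^ (b+1) * P12 ^ a) x := by rw [this]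
        _ = ((P13 + P23) ^ (b+1)) ((P12 ^ a) x) := rfl
    rw [S, pderiv_S, pderiv_S, S_add_left, S_add_left, ih, ih, ih, ih, ← hswap]
    have : (P13 + P23) (Phi f g h)
        = ((Phi (pderiv 0 f) g (pderiv 1 h) - Phi (pderiv 1 f) g (pderiv 0 h))
            + (Phi f (pderiv 0 g) (pderiv 1 h) - Phi f (pderiv 1 g) (pderiv 0 h))) := by
      rw [LinearMap.add_apply, P13_Phi, P23_Phi]
    rw [this]
    simp only [map_add, map_sub]
    abel

lemma K2 (a b : ℕ) (f g h : R2) :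
    S a f (S b g h) = mu (((P12 + P13) ^ a) ((P23 ^ b) (Phi f g h))) := by
  induction a generalizing f g h with
  | zero =>
    simp only [pow_zero, Module.End.one_apply, mu_P23_pow]
    rfl
  | succ a ih =>
    have hswap : ∀ x : V6,
        ((P12 + P13) ^ a) ((P23 ^ b) ((P12 + P13) x))
          = ((P12 + P13) ^ (a+1)) ((P23 ^ b) x) := by
      intro x
      have : (P12 + P13) ^ a * (P23 ^ b * (P12 + P13))
          = (P12 + P13) ^ (a+1) * P23 ^ b := by
        rw [(commSR.pow_left b).eq, ← mul_assoc, ← pow_succ]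
      calc ((P12 + P13) ^ a) ((P23 ^ b) ((P12 + P13) x))
          = ((P12 + P13) ^ a * (P23 ^ b * (P12 + P13))) x := rfl
        _ = ((P12 + P13) ^ (a+1) * P23 ^ b) x := by rw [this]
        _ = ((P12 + P13) ^ (a+1)) ((P23 ^ b) x) := rfl
    rw [S, pderiv_S, pderiv_S, S_add_right, S_add_right, ih, ih, ih, ih, ← hswap]
    have : (P12 + P13) (Phi f g h)
        = ((Phi (pderiv 0 f) (pderiv 1 g) h - Phi (pderiv 1 f) (pderiv 0 g) h)
            + (Phi (pderiv 0 f) g (pderiv 1 h) - Phi (pderiv 1 f) g (pderiv 0 h))) := by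
      rw [LinearMap.add_apply, P12_Phi, P13_Phi]
    rw [this]
    simp only [map_add, map_sub]
    abel

/-- The Moyal product on `ℂ[x,p][[ℏ]]`, `f ⋆ g = Σ_k ℏ^k · moyalTerm k f g`, extended
`ℏ`-bilinearly to formal power series with polynomial coefficients. -/
noncomputable def moyal (F G : PowerSeries (MvPolynomial (Fin 2) ℂ)) :
    PowerSeries (MvPolynomial (Fin 2) ℂ) :=
  PowerSeries.mk fun n =>
    ∑ t ∈ Finset.Nat.antidiagonalTuple 3 n,
      moyalTerm (t 2) (PowerSeries.coeff (t 0) F) (PowerSeries.coeff (t 1) G)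

lemma moyalTerm_zero_left (k : ℕ) (g : R2) : moyalTerm k 0 g = 0 := by
  rw [moyalTerm_eq, S_zero_left, smul_zero]

lemma moyalTerm_zero_right (k : ℕ) (f : R2) : moyalTerm k f 0 = 0 := by
  rw [moyalTerm_eq, S_zero_right, smul_zero]

lemma moyal_C_C (f g : R2) :
    moyal (PowerSeries.C f) (PowerSeries.C g)
      = PowerSeries.mk fun k => moyalTerm k f g := by
  refine PowerSeries.ext fun n => ?_
  rw [moyal, PowerSeries.coeff_mk, PowerSeries.coeff_mk]
  refine (Finset.sum_eq_single_of_mem (![0, 0, n]) ?_ ?_).trans ?_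
  · rw [Finset.Nat.mem_antidiagonalTuple, Fin.sum_univ_three]; simp
  · intro t ht hne
    rw [Finset.Nat.mem_antidiagonalTuple, Fin.sum_univ_three] at ht
    by_cases h0 : t 0 = 0
    · by_cases h1 : t 1 = 0
      · exact absurd (by funext i; fin_cases i <;> simp [h0, h1] <;> omega) hne
      · simp [PowerSeries.coeff_C, h1, moyalTerm_zero_right]
    · simp [PowerSeries.coeff_C, h0, moyalTerm_zero_left]
  · show moyalTerm n (PowerSeries.coeff 0 _) (PowerSeries.coeff 0 _) = _
    simp [PowerSeries.coeff_C]

lemma coeff_moyalL (f g h : R2) (n : ℕ) :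
    PowerSeries.coeff n
        (moyal (moyal (PowerSeries.C f) (PowerSeries.C g)) (PowerSeries.C h))
      = ∑ a ∈ Finset.range (n+1), moyalTerm (n - a) (moyalTerm a f g) h := by
  rw [moyal_C_C, moyal, PowerSeries.coeff_mk]
  simp only [PowerSeries.coeff_mk]
  have hfil := Finset.sum_filter_of_ne (s := Finset.Nat.antidiagonalTuple 3 n)
      (f := fun t : Fin 3 → ℕ => moyalTerm (t 2) (moyalTerm (t 0) f g)
        (PowerSeries.coeff (t 1) (PowerSeries.C h)))
      (p := fun t => t 1 = 0) (by
    intro t _ hval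
    by_contra h1
    exact hval (by simp only [PowerSeries.coeff_C, if_neg h1, moyalTerm_zero_right]))
  refine hfil.symm.trans ?_
  refine Finset.sum_nbij' (fun t => t 0) (fun a => ![a, 0, n - a]) ?_ ?_ ?_ ?_ ?_
  · intro t ht
    simp only [Finset.mem_filter, Finset.Nat.mem_antidiagonalTuple, Fin.sum_univ_three] at ht
    show t 0 ∈ Finset.range (n + 1)
    exact Finset.mem_range.mpr (by omega)
  · intro a ha
    rw [Finset.mem_range] at ha
    simp only [Finset.mem_filter, Finset.Nat.mem_antidiagonalTuple, Fin.sum_univ_three]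
    refine ⟨?_, rfl⟩
    show a + 0 + (n - a) = n
    omega
  · intro t ht
    simp only [Finset.mem_filter, Finset.Nat.mem_antidiagonalTuple, Fin.sum_univ_three] at ht
    funext i; fin_cases i
    · rfl
    · exact ht.2.symm
    · show n - t 0 = t 2; omega
  · intro a _; rfl
  · intro t ht
    simp only [Finset.mem_filter, Finset.Nat.mem_antidiagonalTuple, Fin.sum_univ_three] at ht
    have h2 : t 2 = n - t 0 := by omega
    rw [ht.2, h2, PowerSeries.coeff_C, if_pos rfl]

lemma coeff_moyalR (f g h : R2) (n : ℕ) :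
    PowerSeries.coeff n
        (moyal (PowerSeries.C f) (moyal (PowerSeries.C g) (PowerSeries.C h)))
      = ∑ a ∈ Finset.range (n+1), moyalTerm a f (moyalTerm (n - a) g h) := by
  rw [moyal_C_C, moyal, PowerSeries.coeff_mk]
  simp only [PowerSeries.coeff_mk]
  have hfil := Finset.sum_filter_of_ne (s := Finset.Nat.antidiagonalTuple 3 n)
      (f := fun t : Fin 3 → ℕ => moyalTerm (t 2) (PowerSeries.coeff (t 0) (PowerSeries.C f))
        (moyalTerm (t 1) g h))
      (p := fun t => t 0 = 0) (by
    intro t _ hval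
    by_contra h0
    exact hval (by simp only [PowerSeries.coeff_C, if_neg h0, moyalTerm_zero_left]))
  refine hfil.symm.trans ?_
  refine Finset.sum_nbij' (fun t => t 2) (fun a => ![0, n - a, a]) ?_ ?_ ?_ ?_ ?_
  · intro t ht
    simp only [Finset.mem_filter, Finset.Nat.mem_antidiagonalTuple, Fin.sum_univ_three] at ht
    show t 2 ∈ Finset.range (n + 1)
    exact Finset.mem_range.mpr (by omega)
  · intro a ha
    rw [Finset.mem_range] at ha
    simp only [Finset.mem_filter, Finset.Nat.mem_antidiagonalTuple, Fin.sum_univ_three]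
    refine ⟨?_, rfl⟩
    show 0 + (n - a) + a = n
    omega
  · intro t ht
    simp only [Finset.mem_filter, Finset.Nat.mem_antidiagonalTuple, Fin.sum_univ_three] at ht
    funext i; fin_cases i
    · exact ht.2.symm
    · show n - t 2 = t 1; omega
    · rfl
  · intro a _; rfl
  · intro t ht
    simp only [Finset.mem_filter, Finset.Nat.mem_antidiagonalTuple, Fin.sum_univ_three] at ht
    have h1 : t 1 = n - t 2 := by omega
    rw [ht.2, h1, PowerSeries.coeff_C, if_pos rfl]

lemma S_smul_right (k : ℕ) (c : ℂ) (f g : R2) : S k f (c • g) = c • S k f g := by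
  induction k generalizing f g with
  | zero => simp [S, mul_smul_comm]
  | succ k ih => simp only [S, Derivation.map_smul, ih, smul_sub]

lemma scal (n a : ℕ) (ha : a ≤ n) :
    ((-Complex.I / 2) ^ (n - a) / ((n - a).factorial : ℂ))
        * ((-Complex.I / 2) ^ a / (a.factorial : ℂ))
      = ((-Complex.I / 2) ^ n / (n.factorial : ℂ)) * (n.choose a : ℂ) := by
  have hfac : (n.choose a : ℂ) * (a.factorial : ℂ) * ((n - a).factorial : ℂ)
      = (n.factorial : ℂ) := by
    exact_mod_cast congrArg (Nat.cast (R := ℂ)) (Nat.choose_mul_factorial_mul_factorial ha)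
  have h1 : ((-Complex.I / 2) : ℂ) ^ (n - a) * (-Complex.I / 2) ^ a = (-Complex.I / 2) ^ n := by
    rw [← pow_add]; congr 1; omega
  have ha0 : (a.factorial : ℂ) ≠ 0 := Nat.cast_ne_zero.mpr (Nat.factorial_ne_zero a)
  have hb0 : ((n - a).factorial : ℂ) ≠ 0 := Nat.cast_ne_zero.mpr (Nat.factorial_ne_zero _)
  have hn0 : (n.factorial : ℂ) ≠ 0 := Nat.cast_ne_zero.mpr (Nat.factorial_ne_zero n)
  rw [div_mul_div_comm, h1]
  have hrhs : ((-Complex.I / 2) ^ n / (n.factorial : ℂ)) * (n.choose a : ℂ)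
      = ((-Complex.I / 2) ^ n * (n.choose a : ℂ)) / (n.factorial : ℂ) := by ring
  rw [hrhs, div_eq_div_iff (mul_ne_zero hb0 ha0) hn0]
  linear_combination ((-Complex.I / 2) ^ n) * hfac.symm

/-- collapse a choose-weighted sum of applied powers into a power of a sum -/
lemma collapse (X Y : Module.End ℂ V6) (hXY : Commute X Y) (n : ℕ) (x : V6) :
    ∑ a ∈ Finset.range (n + 1), (n.choose a : ℂ) • mu ((X ^ a * Y ^ (n - a)) x)
      = mu (((X + Y) ^ n) x) := by
  rw [Commute.add_pow hXY]
  rw [LinearMap.sum_apply, map_sum]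
  refine Finset.sum_congr rfl fun a _ => ?_
  have hc : ((n.choose a : Module.End ℂ V6)) x = (n.choose a : ℕ) • x := by
    simp
  have h2 : (X ^ a * Y ^ (n - a) * (n.choose a : Module.End ℂ V6)) x
      = (n.choose a) • ((X ^ a) ((Y ^ (n - a)) x)) := by
    rw [Module.End.mul_apply, hc, map_nsmul, Module.End.mul_apply]
  rw [h2, map_nsmul, Nat.cast_smul_eq_nsmul, Module.End.mul_apply]

/-- The Moyal product on polynomial functions on `ℝ²` is associative as a product on
`ℂ[x,p][[ℏ]]`. -/
theorem moyal_assoc (f g h : MvPolynomial (Fin 2) ℂ) :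
    moyal (moyal (PowerSeries.C f) (PowerSeries.C g)) (PowerSeries.C h) =
      moyal (PowerSeries.C f) (moyal (PowerSeries.C g) (PowerSeries.C h)) := by
  refine PowerSeries.ext fun n => ?_
  rw [coeff_moyalL, coeff_moyalR]
  have hLterm : ∀ a ∈ Finset.range (n + 1),
      moyalTerm (n - a) (moyalTerm a f g) h
        = (((-Complex.I / 2) ^ n / (n.factorial : ℂ)) * (n.choose a : ℂ))
            • mu ((P12 ^ a * (P13 + P23) ^ (n - a)) (Phi f g h)) := by
    intro a ha
    rw [Finset.mem_range] at ha
    have hswap : (P12 ^ a * (P13 + P23) ^ (n - a)) (Phi f g h)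
        = ((P13 + P23) ^ (n - a)) ((P12 ^ a) (Phi f g h)) := by
      rw [(commQP.pow_pow a (n - a)).eq, Module.End.mul_apply]
    rw [moyalTerm_eq, moyalTerm_eq, S_smul_left, smul_smul, K1,
      scal n a (by omega), hswap]
  have hRterm : ∀ a ∈ Finset.range (n + 1),
      moyalTerm a f (moyalTerm (n - a) g h)
        = (((-Complex.I / 2) ^ n / (n.factorial : ℂ)) * (n.choose a : ℂ))
            • mu (((P12 + P13) ^ a * P23 ^ (n - a)) (Phi f g h)) := by
    intro a ha
    rw [Finset.mem_range] at ha
    rw [moyalTerm_eq, moyalTerm_eq, S_smul_right, smul_smul, K2, mul_comm,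
      scal n a (by omega), Module.End.mul_apply]
  rw [Finset.sum_congr rfl hLterm, Finset.sum_congr rfl hRterm]
  simp only [mul_smul]
  rw [← Finset.smul_sum, ← Finset.smul_sum,
    collapse P12 (P13 + P23) commQP n, collapse (P12 + P13) P23 commSR.symm n,
    add_assoc]
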